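/- Let n ≥ 2. For the explicit generalized Gell-Mann matrices — Λ^{(ij)} = E_{ij} + E_{ji} and Λ^{[ij]} = −i E_{ij} + i E_{ji} for 1 ≤ i < j ≤ n, and Λ^{(d)} = √(2/(d(d+1))) (Σ_{p=1}^{d} E_{pp} − d E_{d+1,d+1}) for 1 ≤ d ≤ n−1 — the tensor commutation matrix satisfies U_{n⊗n} = (1/n) I_n ⊗ I_n + (1/2) [ Σ_{1≤i<j≤n} Λ^{(ij)} ⊗ Λ^{(ij)} + Σ_{1≤i<j≤n} Λ^{[ij]} ⊗ Λ^{[ij]} + Σ_{d=1}^{n−1} Λ^{(d)} ⊗ Λ^{(d)} ]. -/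

import Mathlib

open Matrix Kronecker

/-- The symmetric generalized Gell-Mann matrix `Λ^{(ij)} = E_{ij} + E_{ji}`. -/
noncomputable def lamS (n : ℕ) (i j : Fin n) : Matrix (Fin n) (Fin n) ℂ :=
  Matrix.single i j 1 + Matrix.single j i 1

/-- The antisymmetric generalized Gell-Mann matrix `Λ^{[ij]} = -i E_{ij} + i E_{ji}`. -/
noncomputable def lamA (n : ℕ) (i j : Fin n) : Matrix (Fin n) (Fin n) ℂ :=
  (-Complex.I) • Matrix.single i j 1 + Complex.I • Matrix.single j i 1

/-- The diagonal generalized Gell-Mann matrix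
`Λ^{(d)} = √(2/(d(d+1))) (Σ_{p=1}^{d} E_{pp} - d E_{d+1,d+1})`, for `1 ≤ d ≤ n-1`
(here `d : Fin n` with value `d`, and indices are zero-based, so the paper's
`E_{pp}`, `1 ≤ p ≤ d`, are the `stdBasisMatrix p p 1` with `p < d`, and the
paper's `E_{d+1,d+1}` is `stdBasisMatrix d d 1`). -/
noncomputable def lamD (n : ℕ) (d : Fin n) : Matrix (Fin n) (Fin n) ℂ :=
  ((Real.sqrt (2 / (((d : ℕ) : ℝ) * (((d : ℕ) : ℝ) + 1))) : ℝ) : ℂ) •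
    ((∑ p : Fin n, if p < d then Matrix.single p p (1 : ℂ) else 0)
      - (((d : ℕ) : ℂ)) • Matrix.single d d 1)

section Aux

set_option linter.unnecessarySeqFocus false

/-- telescoping sum -/
lemma gm_tel (m n : ℕ) (h : m < n) :
    ∑ d ∈ Finset.Ico (m+1) n, (2 / ((d:ℂ) * ((d:ℂ)+1))) = 2/((m:ℂ)+1) - 2/(n:ℂ) := by
  induction n with
  | zero => omega
  | succ k ih =>
    rcases Nat.lt_or_ge m k with hk | hk
    · rw [Finset.sum_Ico_succ_top (by omega), ih hk]
      have hk0 : (k:ℂ) ≠ 0 := by exact_mod_cast (by omega : k ≠ 0)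
      have hk1 : (k:ℂ) + 1 ≠ 0 := Nat.cast_add_one_ne_zero k
      push_cast
      field_simp
      ring
    · have : m = k := by omega
      subst this
      simp [Finset.Ico_self]

lemma iteMatApply {m n' : Type*} (P : Prop) [Decidable P]
    (M : Matrix m n' ℂ) (x : m) (y : n') :
    (if P then M else 0) x y = if P then M x y else 0 := by
  split <;> simp

lemma gm_key1 (n : ℕ) (p q r s : Fin n) :
    (∑ x : Fin n, ∑ y : Fin n, if x < y then
      (if x = p ∧ y = q then (1:ℂ) else 0) * (if x = r ∧ y = s then 1 else 0) else 0)
    = if p = r ∧ q = s ∧ p < q then 1 else 0 := by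
  have h : ∀ x y : Fin n, (if x < y then
      (if x = p ∧ y = q then (1:ℂ) else 0) * (if x = r ∧ y = s then 1 else 0) else 0)
      = if x = p then (if y = q then (if p = r ∧ q = s ∧ p < q then 1 else 0) else 0) else 0 := by
    intro x y
    split_ifs <;> simp_all <;> omega
  simp only [h]
  simp [Finset.sum_ite_eq']

lemma gm_key2 (n : ℕ) (p q r s : Fin n) :
    (∑ x : Fin n, ∑ y : Fin n, if x < y then
      (if x = p ∧ y = q then (1:ℂ) else 0) * (if y = r ∧ x = s then 1 else 0) else 0)
    = if p = s ∧ q = r ∧ p < q then 1 else 0 := by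
  have h : ∀ x y : Fin n, (if x < y then
      (if x = p ∧ y = q then (1:ℂ) else 0) * (if y = r ∧ x = s then 1 else 0) else 0)
      = if x = p then (if y = q then (if p = s ∧ q = r ∧ p < q then 1 else 0) else 0) else 0 := by
    intro x y
    split_ifs <;> simp_all <;> omega
  simp only [h]
  simp [Finset.sum_ite_eq']

lemma gm_key3 (n : ℕ) (p q r s : Fin n) :
    (∑ x : Fin n, ∑ y : Fin n, if x < y then
      (if y = p ∧ x = q then (1:ℂ) else 0) * (if x = r ∧ y = s then 1 else 0) else 0)
    = if q = r ∧ p = s ∧ q < p then 1 else 0 := by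
  have h : ∀ x y : Fin n, (if x < y then
      (if y = p ∧ x = q then (1:ℂ) else 0) * (if x = r ∧ y = s then 1 else 0) else 0)
      = if x = q then (if y = p then (if q = r ∧ p = s ∧ q < p then 1 else 0) else 0) else 0 := by
    intro x y
    split_ifs <;> simp_all <;> omega
  simp only [h]
  simp [Finset.sum_ite_eq']

lemma gm_key4 (n : ℕ) (p q r s : Fin n) :
    (∑ x : Fin n, ∑ y : Fin n, if x < y then
      (if y = p ∧ x = q then (1:ℂ) else 0) * (if y = r ∧ x = s then 1 else 0) else 0)
    = if p = r ∧ q = s ∧ q < p then 1 else 0 := by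
  have h : ∀ x y : Fin n, (if x < y then
      (if y = p ∧ x = q then (1:ℂ) else 0) * (if y = r ∧ x = s then 1 else 0) else 0)
      = if x = q then (if y = p then (if p = r ∧ q = s ∧ q < p then 1 else 0) else 0) else 0 := by
    intro x y
    split_ifs <;> simp_all <;> omega
  simp only [h]
  simp [Finset.sum_ite_eq']

lemma gm_Ssum (n : ℕ) (a b c e : Fin n) :
    (∑ i : Fin n, ∑ j : Fin n, if i < j then lamS n i j ⊗ₖ lamS n i j else 0) (a,b) (c,e)
    = (if a = b ∧ c = e ∧ a ≠ c then 1 else 0) + (if a = e ∧ b = c ∧ a ≠ b then 1 else 0) := by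
  simp only [Matrix.sum_apply, iteMatApply, kroneckerMap_apply, lamS,
    Matrix.add_apply, Matrix.single, Matrix.of_apply]
  have h : ∀ x y : Fin n, (if x < y then
      ((if x = a ∧ y = c then (1:ℂ) else 0) + if y = a ∧ x = c then 1 else 0) *
        ((if x = b ∧ y = e then 1 else 0) + if y = b ∧ x = e then 1 else 0) else 0)
      = (if x < y then (if x = a ∧ y = c then (1:ℂ) else 0) * (if x = b ∧ y = e then 1 else 0) else 0)
      + (if x < y then (if x = a ∧ y = c then (1:ℂ) else 0) * (if y = b ∧ x = e then 1 else 0) else 0)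
      + (if x < y then (if y = a ∧ x = c then (1:ℂ) else 0) * (if x = b ∧ y = e then 1 else 0) else 0)
      + (if x < y then (if y = a ∧ x = c then (1:ℂ) else 0) * (if y = b ∧ x = e then 1 else 0) else 0) := by
    intro x y; split <;> ring
  simp only [h, Finset.sum_add_distrib, gm_key1, gm_key2, gm_key3, gm_key4]
  split_ifs <;> (try norm_num) <;> omega

lemma gm_Asum (n : ℕ) (a b c e : Fin n) :
    (∑ i : Fin n, ∑ j : Fin n, if i < j then lamA n i j ⊗ₖ lamA n i j else 0) (a,b) (c,e)
    = -(if a = b ∧ c = e ∧ a ≠ c then 1 else 0) + (if a = e ∧ b = c ∧ a ≠ b then 1 else 0) := by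
  simp only [Matrix.sum_apply, iteMatApply, kroneckerMap_apply, lamA,
    Matrix.add_apply, Matrix.smul_apply, Matrix.single, Matrix.of_apply, smul_eq_mul]
  have h : ∀ x y : Fin n, (if x < y then
      (-Complex.I * (if x = a ∧ y = c then (1:ℂ) else 0) + Complex.I * if y = a ∧ x = c then 1 else 0) *
        (-Complex.I * (if x = b ∧ y = e then 1 else 0) + Complex.I * if y = b ∧ x = e then 1 else 0) else 0)
      = -(if x < y then (if x = a ∧ y = c then (1:ℂ) else 0) * (if x = b ∧ y = e then 1 else 0) else 0)
      + (if x < y then (if x = a ∧ y = c then (1:ℂ) else 0) * (if y = b ∧ x = e then 1 else 0) else 0)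
      + (if x < y then (if y = a ∧ x = c then (1:ℂ) else 0) * (if x = b ∧ y = e then 1 else 0) else 0)
      + -(if x < y then (if y = a ∧ x = c then (1:ℂ) else 0) * (if y = b ∧ x = e then 1 else 0) else 0) := by
    intro x y
    split
    · linear_combination (((if y = a ∧ x = c then (1:ℂ) else 0) - (if x = a ∧ y = c then 1 else 0)) *
        ((if y = b ∧ x = e then (1:ℂ) else 0) - (if x = b ∧ y = e then 1 else 0))) * Complex.I_sq
    · norm_num
  simp only [h, Finset.sum_add_distrib, Finset.sum_neg_distrib, gm_key1, gm_key2, gm_key3, gm_key4]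
  split_ifs <;> (try norm_num) <;> omega

lemma gm_mulswap (v x y : ℂ) : v * x * (v * y) = v * v * x * y := by ring

lemma gm_lamD_apply (n : ℕ) (d a c : Fin n) :
    lamD n d a c = ((Real.sqrt (2 / (((d:ℕ):ℝ) * (((d:ℕ):ℝ) + 1))) : ℝ) : ℂ) *
      ((if a = c ∧ a < d then 1 else 0) - ((d:ℕ):ℂ) * (if d = a ∧ d = c then 1 else 0)) := by
  simp only [lamD, Matrix.smul_apply, Matrix.sub_apply, Matrix.sum_apply, iteMatApply,
    Matrix.single, Matrix.of_apply, smul_eq_mul]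
  congr 2
  have h : ∀ p : Fin n, (if p < d then (if p = a ∧ p = c then (1:ℂ) else 0) else 0)
      = if p = a then (if a = c ∧ a < d then 1 else 0) else 0 := by
    intro p
    split_ifs <;> simp_all <;> omega
  simp only [h]
  simp [Finset.sum_ite_eq']

/-- the diagonal scalar sum, ℕ version -/
lemma gm_diagNat (n a b : ℕ) (hb : b < n) (hab : a ≤ b) :
    ∑ k ∈ Finset.range n, (if k ≠ 0 then
        (2/((k:ℂ)*((k:ℂ)+1))) * ((if a < k then 1 else 0) - (k:ℂ) * (if k = a then 1 else 0))
          * ((if b < k then 1 else 0) - (k:ℂ) * (if k = b then 1 else 0)) else 0)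
    = 2 * (if a = b then 1 else 0) - 2/(n:ℂ) := by
  set F : ℕ → ℂ := fun k => if k ≠ 0 then
        (2/((k:ℂ)*((k:ℂ)+1))) * ((if a < k then 1 else 0) - (k:ℂ) * (if k = a then 1 else 0))
          * ((if b < k then 1 else 0) - (k:ℂ) * (if k = b then 1 else 0)) else 0 with hF
  have hFbig : ∀ k, b < k → F k = 2/((k:ℂ)*((k:ℂ)+1)) := by
    intro k hk
    have h1 : a < k := lt_of_le_of_lt hab hk
    have hk0 : k ≠ 0 := by omega
    simp only [hF, if_pos h1, if_pos hk, if_neg (by omega : ¬ k = a), if_neg (by omega : ¬ k = b),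
      if_pos hk0, hk0]
    ring
  have hn0 : (n:ℂ) ≠ 0 := by exact_mod_cast (by omega : n ≠ 0)
  rcases Nat.eq_zero_or_pos b with rfl | hb1
  · -- b = 0, hence a = 0
    have ha : a = 0 := by omega
    subst ha
    rw [Finset.range_eq_Ico, Finset.sum_eq_sum_Ico_succ_bot (by omega : 0 < n)]
    rw [Finset.sum_congr rfl (fun k hk => hFbig k (by simp [Finset.mem_Ico] at hk; omega))]
    rw [show (0:ℕ)+1 = 0+1 from rfl, gm_tel 0 n (by omega)]
    simp only [hF]
    norm_num
  · -- b ≥ 1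
    have hb0 : (b:ℂ) ≠ 0 := by exact_mod_cast (by omega : b ≠ 0)
    have hb10 : (b:ℂ) + 1 ≠ 0 := Nat.cast_add_one_ne_zero b
    have hsub : ∑ k ∈ Finset.range n, F k = ∑ k ∈ Finset.Ico b n, F k := by
      refine (Finset.sum_subset ?_ ?_).symm
      · intro x hx
        simp only [Finset.mem_Ico] at hx
        exact Finset.mem_range.mpr hx.2
      · intro x hx hnx
        simp only [Finset.mem_range] at hx
        simp only [Finset.mem_Ico, not_and, not_lt] at hnx
        have hxb : x < b := by omega
        simp only [hF, if_neg (by omega : ¬ b < x), if_neg (by omega : ¬ x = b)]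
        split <;> ring_nf <;> simp
    rw [hsub, Finset.sum_eq_sum_Ico_succ_bot hb]
    rw [Finset.sum_congr rfl (fun k hk => hFbig k (by simp [Finset.mem_Ico] at hk; omega))]
    rw [gm_tel b n hb]
    rcases Nat.lt_or_ge a b with hab' | hab'
    · -- a < b
      have hFb : F b = 2/((b:ℂ)*((b:ℂ)+1)) * 1 * (0 - (b:ℂ) * 1) := by
        simp only [hF]
        rw [if_pos (by omega : b ≠ 0), if_pos hab', if_neg (by omega : ¬ b = a),
          if_neg (lt_irrefl b)]
        norm_num
      rw [hFb, if_neg (by omega : ¬ a = b)]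
      field_simp
      ring
    · -- a = b
      have ha : a = b := by omega
      subst ha
      have hFb : F a = 2/((a:ℂ)*((a:ℂ)+1)) * (0 - (a:ℂ) * 1) * (0 - (a:ℂ) * 1) := by
        simp only [hF]
        rw [if_pos (by omega : a ≠ 0), if_neg (lt_irrefl a)]
        norm_num
      rw [hFb, if_pos rfl]
      field_simp
      ring

lemma gm_Dsum (n : ℕ) (hn : 2 ≤ n) (a b c e : Fin n) :
    (∑ d : Fin n, if (d : ℕ) ≠ 0 then lamD n d ⊗ₖ lamD n d else 0) (a,b) (c,e)
    = if a = c ∧ b = e then 2 * (if a = b then 1 else 0) - 2/(n:ℂ) else 0 := by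
  simp only [Matrix.sum_apply, iteMatApply, kroneckerMap_apply, gm_lamD_apply]
  by_cases hac : a = c
  · by_cases hbe : b = e
    · subst hac; subst hbe
      rw [if_pos ⟨rfl, rfl⟩]
      -- reduce to scalar sum
      set F : ℕ → ℂ := (fun k => if k ≠ 0 then
              (2/((k:ℂ)*((k:ℂ)+1))) * ((if (a:ℕ) < k then 1 else 0) - (k:ℂ) * (if k = (a:ℕ) then 1 else 0))
                * ((if (b:ℕ) < k then 1 else 0) - (k:ℂ) * (if k = (b:ℕ) then 1 else 0)) else 0) with hFdef
      have hpt : ∀ d : Fin n, (if (d:ℕ) ≠ 0 then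
          ((Real.sqrt (2 / (((d:ℕ):ℝ) * (((d:ℕ):ℝ) + 1))) : ℝ) : ℂ) *
            ((if a = a ∧ a < d then 1 else 0) - ((d:ℕ):ℂ) * (if d = a ∧ d = a then 1 else 0)) *
          (((Real.sqrt (2 / (((d:ℕ):ℝ) * (((d:ℕ):ℝ) + 1))) : ℝ) : ℂ) *
            ((if b = b ∧ b < d then 1 else 0) - ((d:ℕ):ℂ) * (if d = b ∧ d = b then 1 else 0))) else 0)
          = F (d:ℕ) := by
        intro d
        simp only [hFdef, true_and, and_self]
        split
        · rw [gm_mulswap]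
          have hv : ((Real.sqrt (2 / (((d:ℕ):ℝ) * (((d:ℕ):ℝ) + 1))) : ℝ) : ℂ) *
              ((Real.sqrt (2 / (((d:ℕ):ℝ) * (((d:ℕ):ℝ) + 1))) : ℝ) : ℂ)
              = 2/(((d:ℕ):ℂ)*(((d:ℕ):ℂ)+1)) := by
            rw [← Complex.ofReal_mul, Real.mul_self_sqrt (by positivity)]
            push_cast
            ring
          rw [hv]
          simp only [Fin.lt_def, Fin.ext_iff]
          try ring
        · rfl
      rw [(Finset.sum_congr rfl fun d _ => hpt d).trans (Fin.sum_univ_eq_sum_range F n)]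
      have hif : (if a = b then (1:ℂ) else 0) = (if (a:ℕ) = (b:ℕ) then 1 else 0) := by
        simp only [Fin.ext_iff]
      rw [hif]
      rcases le_or_gt (a:ℕ) (b:ℕ) with hab | hab
      · exact gm_diagNat n a b b.isLt hab
      · have hcomm : ∀ k ∈ Finset.range n, F k
            = if k ≠ 0 then
              (2/((k:ℂ)*((k:ℂ)+1))) * ((if (b:ℕ) < k then 1 else 0) - (k:ℂ) * (if k = (b:ℕ) then 1 else 0))
                * ((if (a:ℕ) < k then 1 else 0) - (k:ℂ) * (if k = (a:ℕ) then 1 else 0)) else 0 := by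
          intro k _
          simp only [hFdef]
          split <;> ring
        rw [Finset.sum_congr rfl hcomm, gm_diagNat n b a a.isLt (le_of_lt hab)]
        have hif2 : (if (b:ℕ) = (a:ℕ) then (1:ℂ) else 0) = (if (a:ℕ) = (b:ℕ) then 1 else 0) := by
          simp only [eq_comm]
        rw [hif2]
    · rw [if_neg (by tauto)]
      refine Finset.sum_eq_zero fun d _ => ?_
      have h1 : ¬(b = e ∧ b < d) := by tauto
      have h2 : ¬(d = b ∧ d = e) := by rintro ⟨rfl, rfl⟩; exact hbe rfl
      simp only [if_neg h1, if_neg h2]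
      split <;> ring_nf <;> simp
  · rw [if_neg (by tauto)]
    refine Finset.sum_eq_zero fun d _ => ?_
    have h1 : ¬(a = c ∧ a < d) := by tauto
    have h2 : ¬(d = a ∧ d = c) := by rintro ⟨rfl, rfl⟩; exact hac rfl
    simp only [if_neg h1, if_neg h2]
    split <;> ring_nf <;> simp

end Aux

set_option maxHeartbeats 1000000 in
/-- for the explicit generalized Gell-Mann matrices,
`U_{n⊗n} = (1/n) Iₙ ⊗ Iₙ + (1/2) [Σ_{i<j} Λ^{(ij)} ⊗ Λ^{(ij)}
  + Σ_{i<j} Λ^{[ij]} ⊗ Λ^{[ij]} + Σ_{d=1}^{n-1} Λ^{(d)} ⊗ Λ^{(d)}]`. -/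
theorem stmt1 (n : ℕ) (hn : 2 ≤ n) :
    (Matrix.of fun (i j : Fin n × Fin n) =>
        if i.1 = j.2 ∧ i.2 = j.1 then (1 : ℂ) else 0)
      = (n : ℂ)⁻¹ • ((1 : Matrix (Fin n) (Fin n) ℂ) ⊗ₖ (1 : Matrix (Fin n) (Fin n) ℂ))
        + (2 : ℂ)⁻¹ •
          ((∑ i : Fin n, ∑ j : Fin n, if i < j then lamS n i j ⊗ₖ lamS n i j else 0)
            + (∑ i : Fin n, ∑ j : Fin n, if i < j then lamA n i j ⊗ₖ lamA n i j else 0)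
            + ∑ d : Fin n, if (d : ℕ) ≠ 0 then lamD n d ⊗ₖ lamD n d else 0) := by
  have hn0 : (n:ℂ) ≠ 0 := by exact_mod_cast (by omega : n ≠ 0)
  ext ⟨a, b⟩ ⟨c, e⟩
  simp only [Matrix.of_apply, Matrix.add_apply, Matrix.smul_apply, smul_eq_mul,
    kroneckerMap_apply, Matrix.one_apply]
  rw [gm_Ssum, gm_Asum, gm_Dsum n hn]
  split_ifs <;> (try omega) <;> field_simp <;> try ring
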